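/- Assume p_1 ≤ … ≤ p_n. For every feasible schedule σ on m machines: Σ_{j=1}^n C_j(σ) ≥ Σ_{j=1}^n ( s + (1/m) Σ_{k=1}^j p_k ). -/

import Mathlib

open Finset

/-- A feasible schedule on `m` identical machines for `n` jobs with processing
times `p` and uniform setup time `s`.  A part is a tuple
`(machine, job, q, t)`: a piece of length `q > 0` of the job, started at time
`t ≥ 0` and preceded by a setup of length `s`, occupying the machine during
`[t, t + s + q)`. -/
structure Schedule (m n : ℕ) (p : Fin n → ℝ) (s : ℝ) where
  parts : Finset (Fin m × Fin n × ℝ × ℝ)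
  q_pos : ∀ x ∈ parts, 0 < x.2.2.1
  t_nonneg : ∀ x ∈ parts, 0 ≤ x.2.2.2
  sum_q : ∀ j : Fin n,
    ∑ x ∈ parts.filter (fun x => x.2.1 = j), x.2.2.1 = p j
  disj : ∀ x ∈ parts, ∀ y ∈ parts, x ≠ y → x.1 = y.1 →
    x.2.2.2 + s + x.2.2.1 ≤ y.2.2.2 ∨ y.2.2.2 + s + y.2.2.1 ≤ x.2.2.2

namespace Schedule

variable {m n : ℕ} {p : Fin n → ℝ} {s : ℝ}

/-- The completion time of job `j`: the largest finishing time `t + s + q`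
over all parts of job `j` (as a supremum of the finite set of these values). -/
noncomputable def C (σ : Schedule m n p s) (j : Fin n) : ℝ :=
  sSup {r : ℝ | ∃ x ∈ σ.parts, x.2.1 = j ∧ r = x.2.2.2 + s + x.2.2.1}

/-- The total completion time of a schedule. -/
noncomputable def total (σ : Schedule m n p s) : ℝ := ∑ j, σ.C j

end Schedule


/-- Packing lemma: disjoint setup+processing intervals within `[0, T]` have
total length at most `T`. -/
lemma pack_lemma {α : Type*} [DecidableEq α] {s : ℝ} (hs : 0 < s) (t q : α → ℝ) (F : Finset α) :
    (∀ x ∈ F, 0 < q x) → (∀ x ∈ F, 0 ≤ t x) →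
    (∀ x ∈ F, ∀ y ∈ F, x ≠ y → t x + s + q x ≤ t y ∨ t y + s + q y ≤ t x) →
    ∀ T : ℝ, 0 ≤ T → (∀ x ∈ F, t x + s + q x ≤ T) →
    ∑ x ∈ F, (s + q x) ≤ T := by
  induction F using Finset.strongInduction with
  | _ F ih =>
    intro hq ht hd T hT hend
    rcases F.eq_empty_or_nonempty with rfl | hne
    · simpa using hT
    · obtain ⟨x, hx, hmax⟩ := F.exists_max_image t hne
      have hsplit : F = insert x (F.erase x) := (Finset.insert_erase hx).symm
      have hsub : F.erase x ⊂ F := Finset.erase_ssubset hx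
      have hkey : ∀ y ∈ F.erase x, t y + s + q y ≤ t x := by
        intro y hy
        have hyF := Finset.mem_of_mem_erase hy
        have hne' : x ≠ y := fun h => (Finset.ne_of_mem_erase hy) h.symm
        rcases hd x hx y hyF hne' with h | h
        · exfalso
          have h1 : t y ≤ t x := hmax y hyF
          have h2 : 0 < q x := hq x hx
          linarith
        · exact h
      have hrec : ∑ y ∈ F.erase x, (s + q y) ≤ t x :=
        ih (F.erase x) hsub
          (fun y hy => hq y (Finset.mem_of_mem_erase hy))
          (fun y hy => ht y (Finset.mem_of_mem_erase hy))
          (fun y hy z hz hyz =>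
            hd y (Finset.mem_of_mem_erase hy) z (Finset.mem_of_mem_erase hz) hyz)
          (t x) (ht x hx) hkey
      have hxend := hend x hx
      rw [hsplit, Finset.sum_insert (Finset.notMem_erase x F)]
      linarith

lemma strictMono_fin_le {c : ℕ} (g : Fin c → ℕ) (hg : StrictMono g) :
    ∀ (k : ℕ) (h : k < c), k ≤ g ⟨k, h⟩ := by
  intro k
  induction k with
  | zero => intro h; exact Nat.zero_le _
  | succ k ihk =>
    intro h
    have hk : k < c := Nat.lt_of_succ_lt h
    have h1 : g ⟨k, hk⟩ < g ⟨k + 1, h⟩ := hg (by simp [Fin.lt_def])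
    have := ihk hk
    omega

/-- Sum over any finset of `Fin n` dominates the sum of the |S| smallest values
of a monotone function. -/
lemma sum_prefix_le_sum {n : ℕ} {p : Fin n → ℝ} (hmono : Monotone p)
    (S : Finset (Fin n)) :
    ∑ k ∈ Finset.univ.filter (fun k : Fin n => (k : ℕ) < S.card), p k
      ≤ ∑ k ∈ S, p k := by
  classical
  set c := S.card with hc
  have hcn : c ≤ n := by simpa using S.card_le_card (Finset.subset_univ S)
  have hEmb := S.orderEmbOfFin (k := c) rfl
  have hmem : ∀ i : Fin c, S.orderEmbOfFin rfl i ∈ S := fun i =>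
    Finset.orderEmbOfFin_mem S rfl i
  have hsum : ∑ k ∈ S, p k = ∑ i : Fin c, p (S.orderEmbOfFin rfl i) := by
    rw [← Finset.sum_image (f := p) (g := S.orderEmbOfFin rfl)
      (by intro x _ y _ h; exact (S.orderEmbOfFin rfl).injective h)]
    congr 1
    symm
    apply Finset.eq_of_subset_of_card_le
    · intro x hx
      simp only [Finset.mem_image] at hx
      obtain ⟨i, _, rfl⟩ := hx
      exact hmem i
    · rw [Finset.card_image_of_injective _ (S.orderEmbOfFin rfl).injective]
      simp [hc]
  have hfilt : Finset.univ.filter (fun k : Fin n => (k : ℕ) < c)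
      = Finset.image (fun i : Fin c => (⟨(i : ℕ), lt_of_lt_of_le i.2 hcn⟩ : Fin n))
          Finset.univ := by
    ext k
    simp only [Finset.mem_filter, Finset.mem_univ, true_and, Finset.mem_image]
    constructor
    · intro hk
      refine ⟨⟨(k : ℕ), hk⟩, ?_⟩
      ext; rfl
    · rintro ⟨i, rfl⟩; exact i.2
  rw [hfilt, Finset.sum_image
      (by intro x _ y _ h; exact Fin.ext (by simpa using congrArg Fin.val h)), hsum]
  apply Finset.sum_le_sum
  intro i _
  apply hmono
  have hsm : StrictMono (fun i : Fin c => ((S.orderEmbOfFin rfl i : Fin n) : ℕ)) := by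
    intro a b hab
    exact (S.orderEmbOfFin rfl).strictMono hab
  have := strictMono_fin_le _ hsm (i : ℕ) i.2
  simpa [Fin.le_def] using this

theorem stmt6 {m n : ℕ} (hm : 0 < m) {p : Fin n → ℝ} (hp : ∀ j, 0 < p j)
    (hmono : Monotone p) {s : ℝ} (hs : 0 < s) (σ : Schedule m n p s) :
    σ.total ≥
      ∑ j : Fin n,
        (s + (1 / (m : ℝ)) * ∑ k ∈ Finset.univ.filter (· ≤ j), p k) := by
  classical
  have hmR : (0 : ℝ) < m := by exact_mod_cast hm
  set π := Tuple.sort σ.C with hπdef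
  have hsortmono : Monotone (σ.C ∘ π) := Tuple.monotone_sort σ.C
  -- the filter of parts of each job is nonempty
  have hne : ∀ j : Fin n, (σ.parts.filter (fun x => x.2.1 = j)).Nonempty := by
    intro j
    by_contra h
    rw [Finset.not_nonempty_iff_eq_empty] at h
    have hq := σ.sum_q j
    rw [h, Finset.sum_empty] at hq
    exact absurd hq.symm (ne_of_gt (hp j))
  -- the completion-time value set as a finset
  have hCset : ∀ j : Fin n,
      {r : ℝ | ∃ x ∈ σ.parts, x.2.1 = j ∧ r = x.2.2.2 + s + x.2.2.1}
        = ↑((σ.parts.filter (fun x => x.2.1 = j)).image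
            (fun x => x.2.2.2 + s + x.2.2.1)) := by
    intro j
    ext r
    simp only [Set.mem_setOf_eq, Finset.coe_image, Set.mem_image, Finset.mem_coe,
      Finset.mem_filter]
    constructor
    · rintro ⟨x, hx, hxj, rfl⟩; exact ⟨x, ⟨hx, hxj⟩, rfl⟩
    · rintro ⟨x, ⟨hx, hxj⟩, rfl⟩; exact ⟨x, hx, hxj, rfl⟩
  -- each finishing time is at most the completion time
  have hub : ∀ j : Fin n, ∀ x ∈ σ.parts, x.2.1 = j →
      x.2.2.2 + s + x.2.2.1 ≤ σ.C j := by
    intro j x hx hxj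
    unfold Schedule.C
    rw [hCset j]
    apply le_csSup (Finset.bddAbove _)
    simp only [Finset.coe_image, Set.mem_image, Finset.mem_coe, Finset.mem_filter]
    exact ⟨x, ⟨hx, hxj⟩, rfl⟩
  -- the setup time is at most each completion time
  have hCs : ∀ j : Fin n, s ≤ σ.C j := by
    intro j
    obtain ⟨x, hx⟩ := hne j
    rw [Finset.mem_filter] at hx
    have := hub j x hx.1 hx.2
    have h1 := σ.q_pos x hx.1
    have h2 := σ.t_nonneg x hx.1
    linarith
  -- main per-index bound
  have key : ∀ j : Fin n,
      s + (1 / (m : ℝ)) * ∑ k ∈ Finset.univ.filter (· ≤ j), p k ≤ σ.C (π j) := by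
    intro j
    set T := σ.C (π j) with hT
    set S : Finset (Fin n) := (Finset.univ.filter (· ≤ j)).image π with hS
    have hjobT : ∀ job ∈ S, σ.C job ≤ T := by
      intro job hjob
      rw [hS, Finset.mem_image] at hjob
      obtain ⟨i, hi, rfl⟩ := hjob
      rw [Finset.mem_filter] at hi
      exact hsortmono hi.2
    set G : Finset (Fin m × Fin n × ℝ × ℝ) :=
      σ.parts.filter (fun x => x.2.1 ∈ S) with hG
    -- total processing of jobs in S
    have hGsum : ∑ x ∈ G, x.2.2.1 = ∑ job ∈ S, p job := by
      have hfib := Finset.sum_fiberwise_of_maps_to (s := G) (t := S)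
        (g := fun x : Fin m × Fin n × ℝ × ℝ => x.2.1)
        (fun x hx => (Finset.mem_filter.mp hx).2)
        (fun x : Fin m × Fin n × ℝ × ℝ => x.2.2.1)
      rw [← hfib]
      apply Finset.sum_congr rfl
      intro job hjob
      rw [← σ.sum_q job]
      apply Finset.sum_congr _ (fun _ _ => rfl)
      rw [hG, Finset.filter_filter]
      apply Finset.filter_congr
      intro x _
      constructor
      · rintro ⟨_, h⟩; exact h
      · rintro h; exact ⟨h ▸ hjob, h⟩
    -- per machine bound
    have hmach : ∀ i : Fin m, ∑ x ∈ G.filter (fun x => x.1 = i), x.2.2.1 ≤ T - s := by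
      intro i
      set F := G.filter (fun x => x.1 = i) with hF
      have hFparts : ∀ x ∈ F, x ∈ σ.parts := by
        intro x hx
        rw [hF, Finset.mem_filter, hG, Finset.mem_filter] at hx
        exact hx.1.1
      have hFS : ∀ x ∈ F, x.2.1 ∈ S := by
        intro x hx
        rw [hF, Finset.mem_filter, hG, Finset.mem_filter] at hx
        exact hx.1.2
      have hFi : ∀ x ∈ F, x.1 = i := by
        intro x hx
        rw [hF, Finset.mem_filter] at hx
        exact hx.2
      have hTpos : (0:ℝ) ≤ T := le_trans hs.le (hCs (π j))
      have hpk := pack_lemma hs (fun x => x.2.2.2) (fun x => x.2.2.1) F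
        (fun x hx => σ.q_pos x (hFparts x hx))
        (fun x hx => σ.t_nonneg x (hFparts x hx))
        (fun x hx y hy hxy =>
          σ.disj x (hFparts x hx) y (hFparts y hy) hxy ((hFi x hx).trans (hFi y hy).symm))
        T hTpos
        (fun x hx => le_trans (hub x.2.1 x (hFparts x hx) rfl) (hjobT _ (hFS x hx)))
      rcases F.eq_empty_or_nonempty with hFe | hFne
      · rw [hFe, Finset.sum_empty]
        have := hCs (π j)
        linarith
      · have hcard : 1 ≤ F.card := Finset.Nonempty.card_pos hFne
        rw [Finset.sum_add_distrib, Finset.sum_const, nsmul_eq_mul] at hpk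
        have : s ≤ (F.card : ℝ) * s := by
          have : (1:ℝ) ≤ F.card := by exact_mod_cast hcard
          nlinarith
        linarith
    -- sum over machines
    have hGT : ∑ x ∈ G, x.2.2.1 ≤ (m : ℝ) * (T - s) := by
      have hfib := Finset.sum_fiberwise_of_maps_to (s := G) (t := (Finset.univ : Finset (Fin m)))
        (g := fun x : Fin m × Fin n × ℝ × ℝ => x.1)
        (fun x _ => Finset.mem_univ x.1)
        (fun x : Fin m × Fin n × ℝ × ℝ => x.2.2.1)
      rw [← hfib]
      calc ∑ i : Fin m, ∑ x ∈ G.filter (fun x => x.1 = i), x.2.2.1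
          ≤ ∑ _i : Fin m, (T - s) := Finset.sum_le_sum (fun i _ => hmach i)
        _ = (m : ℝ) * (T - s) := by simp [mul_comm]; ring
    -- prefix sum bound
    have hScard : S.card = (Finset.univ.filter (· ≤ j)).card := by
      rw [hS]
      exact Finset.card_image_of_injective _ π.injective
    have hfilt_eq : Finset.univ.filter (fun k : Fin n => (k : ℕ) < S.card)
        = Finset.univ.filter (· ≤ j) := by
      have hcard2 : (Finset.univ.filter (· ≤ j)).card = (j : ℕ) + 1 := by
        have : Finset.univ.filter (· ≤ j) = Finset.Iic j := by
          ext k; simp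
        rw [this, Fin.card_Iic]
      rw [hScard, hcard2]
      ext k
      simp only [Finset.mem_filter, Finset.mem_univ, true_and, Fin.le_def]
      omega
    have hpre : ∑ k ∈ Finset.univ.filter (· ≤ j), p k ≤ ∑ k ∈ S, p k := by
      rw [← hfilt_eq]
      exact sum_prefix_le_sum hmono S
    have hfinal : ∑ k ∈ Finset.univ.filter (· ≤ j), p k ≤ (m : ℝ) * (T - s) := by
      calc ∑ k ∈ Finset.univ.filter (· ≤ j), p k ≤ ∑ k ∈ S, p k := hpre
        _ = ∑ x ∈ G, x.2.2.1 := hGsum.symm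
        _ ≤ (m : ℝ) * (T - s) := hGT
    have h1m : (1 / (m:ℝ)) * ∑ k ∈ Finset.univ.filter (· ≤ j), p k ≤ T - s := by
      rw [div_mul_eq_mul_div, one_mul, div_le_iff₀ hmR]
      linarith [hfinal]
    linarith
  -- conclude
  have hperm : σ.total = ∑ j : Fin n, σ.C (π j) := by
    rw [Schedule.total, ← Equiv.sum_comp π σ.C]
  rw [ge_iff_le, hperm]
  exact Finset.sum_le_sum (fun j _ => key j)
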